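/- Let Ξ ⊂ ℝⁿ be a nonempty compact set and 0 < μ_low < μ_high. Define Z := ⋃_{z∈Ξ, μ∈[μ_low,μ_high]} prox_{μ⁻¹g}(z). Then there exists ν > 0 (depending only on Ξ, μ_low, μ_high) such that for every u ∈ Z with u ≠ 0, every nonzero entry of the vector Cu satisfies |(Cu)_i| ≥ ν, where C := [B; I] ∈ ℝ^{(p+n)×n} is the matrix obtained by stacking B on top of the n×n identity matrix (note Cu ≠ 0 whenever u ≠ 0). Equivalently, inf_{u∈Z∖{0}} min_{i∈supp(Cu)} |(Cu)_i| ≥ ν. -/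

import Mathlib

open scoped Classical

noncomputable section

/-- The box `Ω = {x : l ≤ x ≤ u}` in ℝⁿ. -/
def Om {n : ℕ} (l u : Fin n → ℝ) : Set (EuclideanSpace ℝ (Fin n)) :=
  {x | ∀ i, l i ≤ x i ∧ x i ≤ u i}

/-- The ℓ₀-norm (number of nonzero entries) of a vector. -/
def zeroNorm {m : ℕ} (v : Fin m → ℝ) : ℕ := (Function.support v).ncard

/-- `prox_{μ⁻¹ g}(z) = argmin_x (μ/2)‖x − z‖² + λ₁‖Bx‖₀ + λ₂‖x‖₀ + δ_Ω(x)`,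
written as the set of minimizers over Ω. -/
def proxSet {n p : ℕ} (B : Matrix (Fin p) (Fin n) ℝ) (lam1 lam2 : ℝ) (l u : Fin n → ℝ)
    (μ : ℝ) (z : EuclideanSpace ℝ (Fin n)) : Set (EuclideanSpace ℝ (Fin n)) :=
  {x | x ∈ Om l u ∧ ∀ y ∈ Om l u,
    μ / 2 * ‖x - z‖ ^ 2 + lam1 * (zeroNorm (B.mulVec x) : ℝ) + lam2 * (zeroNorm x : ℝ) ≤
    μ / 2 * ‖y - z‖ ^ 2 + lam1 * (zeroNorm (B.mulVec y) : ℝ) + lam2 * (zeroNorm y : ℝ)}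

lemma aux_mulVec_continuous {m : Type*} {n : ℕ} (A : Matrix m (Fin n) ℝ) (j : m) :
    Continuous fun x : EuclideanSpace ℝ (Fin n) => A.mulVec x j := by
  simp only [Matrix.mulVec, dotProduct]
  exact continuous_finset_sum _ fun k _ =>
    (continuous_const.mul ((EuclideanSpace.proj k).continuous))

lemma aux_fromRows_inl {n p : ℕ} (A : Matrix (Fin p) (Fin n) ℝ) (v : Fin n → ℝ) (j : Fin p) :
    (Matrix.fromRows A (1 : Matrix (Fin n) (Fin n) ℝ)).mulVec v (Sum.inl j) = A.mulVec v j := by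
  simp [Matrix.fromRows, Matrix.mulVec]
  rfl

lemma aux_fromRows_inr {n p : ℕ} (A : Matrix (Fin p) (Fin n) ℝ) (v : Fin n → ℝ) (j : Fin n) :
    (Matrix.fromRows A (1 : Matrix (Fin n) (Fin n) ℝ)).mulVec v (Sum.inr j) = v j := by
  simp [Matrix.fromRows, Matrix.mulVec, dotProduct, Matrix.one_apply]
  show ∑ i, (1 : Matrix (Fin n) (Fin n) ℝ) j i * v i = v j
  simp [Matrix.one_apply]

lemma aux_isCompact_Om {n : ℕ} (l u : Fin n → ℝ) : IsCompact (Om l u) := by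
  have h : Om l u
      = (⇑(EuclideanSpace.equiv (Fin n) ℝ)) ⁻¹' (Set.univ.pi fun i => Set.Icc (l i) (u i)) := by
    ext x
    simp only [Om, Set.mem_setOf_eq, Set.mem_preimage, Set.mem_pi, Set.mem_univ, true_implies,
      Set.mem_Icc]
    rfl
  rw [h]
  exact (EuclideanSpace.equiv (Fin n) ℝ).toHomeomorph.isCompact_preimage.mpr
    (isCompact_univ_pi fun i => isCompact_Icc)

lemma aux_real (μ μlow μhigh δ M a b c : ℝ) (hμ1 : μlow ≤ μ) (hμlow : 0 < μlow)
    (hμ2 : μ ≤ μhigh) (hM0 : 0 < M) (hδ0 : 0 < δ)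
    (hquad : δ ≤ μ / 2 * b ^ 2 - μ / 2 * a ^ 2) (hba : b - a ≤ c)
    (hsum : b + a ≤ M) (ha0 : 0 ≤ a) (hb0 : 0 ≤ b) (hc0 : 0 ≤ c) :
    2 * δ ≤ c * (μhigh * M) := by
  have hμ0 : (0:ℝ) < μ := lt_of_lt_of_le hμlow hμ1
  have hkey1 : (b - a) * (b + a) ≤ c * M := by
    rcases le_or_gt (b - a) 0 with hneg | hpos
    · have h1 : (b - a) * (b + a) ≤ 0 := mul_nonpos_of_nonpos_of_nonneg hneg (by linarith)
      have h2 : (0:ℝ) ≤ c * M := mul_nonneg hc0 hM0.le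
      linarith
    · exact mul_le_mul hba hsum (by linarith) hc0
  have h2 : δ ≤ μ / 2 * (c * M) := by
    have e1 : μ / 2 * b ^ 2 - μ / 2 * a ^ 2 = μ / 2 * ((b - a) * (b + a)) := by ring
    rw [e1] at hquad
    calc δ ≤ μ / 2 * ((b - a) * (b + a)) := hquad
      _ ≤ μ / 2 * (c * M) := mul_le_mul_of_nonneg_left hkey1 (by linarith)
  have h3 : μ / 2 * (c * M) ≤ μhigh / 2 * (c * M) :=
    mul_le_mul_of_nonneg_right (by linarith) (mul_nonneg hc0 hM0.le)
  nlinarith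

lemma aux_key {n p : ℕ} (B : Matrix (Fin p) (Fin n) ℝ) (lam1 lam2 : ℝ)
    (hlam1 : 0 < lam1) (hlam2 : 0 < lam2) (l u : Fin n → ℝ)
    (Ξ : Set (EuclideanSpace ℝ (Fin n))) (hΞcomp : IsCompact Ξ)
    (μlow μhigh : ℝ) (hμlow : 0 < μlow) (hμ : μlow < μhigh)
    (i : Fin p ⊕ Fin n) (S : Set (Fin n)) (T : Set (Fin p)) :
    ∃ ν > (0:ℝ), ∀ z ∈ Ξ, ∀ μ : ℝ, μlow ≤ μ → μ ≤ μhigh →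
      ∀ x ∈ proxSet B lam1 lam2 l u μ z,
      Function.support x = S → Function.support (B.mulVec x) = T →
      (Matrix.fromRows B (1 : Matrix (Fin n) (Fin n) ℝ)).mulVec x i ≠ 0 →
      ν ≤ |(Matrix.fromRows B (1 : Matrix (Fin n) (Fin n) ℝ)).mulVec x i| := by
  -- bounds on norms
  obtain ⟨RΞ, hRΞ⟩ : ∃ R, ∀ z ∈ Ξ, ‖z‖ ≤ R := by
    obtain ⟨r, hr⟩ := hΞcomp.isBounded.subset_closedBall 0
    exact ⟨r, fun z hz => by simpa using hr hz⟩
  obtain ⟨RΩ, hRΩ⟩ : ∃ R, ∀ w ∈ Om l u, ‖w‖ ≤ R := by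
    obtain ⟨r, hr⟩ := (aux_isCompact_Om l u).isBounded.subset_closedBall 0
    exact ⟨r, fun w hw => by simpa using hr hw⟩
  obtain ⟨M, hM⟩ : ∃ m : ℝ, m = max 1 (2 * (RΩ + RΞ)) := ⟨_, rfl⟩
  have hM0 : (0:ℝ) < M := lt_of_lt_of_le one_pos (hM ▸ le_max_left _ _)
  have hMge : 2 * (RΩ + RΞ) ≤ M := hM ▸ le_max_right _ _
  obtain ⟨δ, hδdef⟩ : ∃ d : ℝ, d = min lam1 lam2 := ⟨_, rfl⟩
  have hδ0 : (0:ℝ) < δ := hδdef ▸ lt_min hlam1 hlam2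
  have hδ1 : δ ≤ lam1 := hδdef ▸ min_le_left _ _
  have hδ2 : δ ≤ lam2 := hδdef ▸ min_le_right _ _
  obtain ⟨δ', hδ'def⟩ : ∃ d : ℝ, d = 2 * δ / (μhigh * M) := ⟨_, rfl⟩
  have hμhigh0 : (0:ℝ) < μhigh := lt_trans hμlow hμ
  have hδ'0 : (0:ℝ) < δ' := by
    rw [hδ'def]
    exact div_pos (by linarith) (mul_pos hμhigh0 hM0)
  -- the sets
  obtain ⟨E, hEdef⟩ : ∃ E : Set (EuclideanSpace ℝ (Fin n)),
      E = {w | w ∈ Om l u ∧ (∀ j, j ∉ S → w j = 0) ∧ (∀ j, j ∉ T → B.mulVec w j = 0)} :=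
    ⟨_, rfl⟩
  obtain ⟨D, hDdef⟩ : ∃ D : Set (EuclideanSpace ℝ (Fin n)),
      D = {w | w ∈ E ∧ (Matrix.fromRows B (1 : Matrix (Fin n) (Fin n) ℝ)).mulVec w i = 0} :=
    ⟨_, rfl⟩
  obtain ⟨E', hE'def⟩ : ∃ F : Set (EuclideanSpace ℝ (Fin n)),
      F = {w | w ∈ E ∧ ∀ y ∈ D, δ' ≤ ‖y - w‖} := ⟨_, rfl⟩
  have hclosed1 : IsClosed {w : EuclideanSpace ℝ (Fin n) | ∀ j, j ∉ S → w j = 0} := by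
    have h : {w : EuclideanSpace ℝ (Fin n) | ∀ j, j ∉ S → w j = 0}
        = ⋂ j, {w : EuclideanSpace ℝ (Fin n) | j ∉ S → w j = 0} := by
      ext w; simp
    rw [h]
    refine isClosed_iInter fun j => ?_
    by_cases hj : j ∈ S
    · simpa [hj] using isClosed_univ (X := EuclideanSpace ℝ (Fin n))
    · simpa [hj] using isClosed_eq ((EuclideanSpace.proj j).continuous)
        (continuous_const (y := (0:ℝ)))
  have hclosed2 : IsClosed {w : EuclideanSpace ℝ (Fin n) | ∀ j, j ∉ T → B.mulVec w j = 0} := by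
    have h : {w : EuclideanSpace ℝ (Fin n) | ∀ j, j ∉ T → B.mulVec w j = 0}
        = ⋂ j, {w : EuclideanSpace ℝ (Fin n) | j ∉ T → B.mulVec w j = 0} := by
      ext w; simp
    rw [h]
    refine isClosed_iInter fun j => ?_
    by_cases hj : j ∈ T
    · simpa [hj] using isClosed_univ (X := EuclideanSpace ℝ (Fin n))
    · simpa [hj] using isClosed_eq (aux_mulVec_continuous B j) (continuous_const (y := (0:ℝ)))
  have hEclosed : IsClosed E := by
    have h : E = Om l u ∩ ({w : EuclideanSpace ℝ (Fin n) | ∀ j, j ∉ S → w j = 0}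
        ∩ {w : EuclideanSpace ℝ (Fin n) | ∀ j, j ∉ T → B.mulVec w j = 0}) := by
      rw [hEdef]
      ext w
      simp only [Set.mem_setOf_eq, Set.mem_inter_iff]
    rw [h]
    exact (aux_isCompact_Om l u).isClosed.inter (hclosed1.inter hclosed2)
  have hE'closed : IsClosed E' := by
    have h : E' = E ∩ ⋂ y ∈ D, {w : EuclideanSpace ℝ (Fin n) | δ' ≤ ‖y - w‖} := by
      rw [hE'def]
      ext w
      simp only [Set.mem_setOf_eq, Set.mem_inter_iff, Set.mem_iInter]
    rw [h]
    exact hEclosed.inter (isClosed_biInter fun y _ =>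
      isClosed_le continuous_const ((continuous_const.sub continuous_id).norm))
  have hEOm : E ⊆ Om l u := by
    rw [hEdef]; exact fun w hw => hw.1
  have hE'cpt : IsCompact E' :=
    (aux_isCompact_Om l u).of_isClosed_subset hE'closed
      (fun w hw => hEOm (by rw [hE'def] at hw; exact hw.1))
  -- the key membership claim
  have hmem : ∀ z ∈ Ξ, ∀ μ : ℝ, μlow ≤ μ → μ ≤ μhigh →
      ∀ x ∈ proxSet B lam1 lam2 l u μ z,
      Function.support x = S → Function.support (B.mulVec x) = T →
      (Matrix.fromRows B (1 : Matrix (Fin n) (Fin n) ℝ)).mulVec x i ≠ 0 → x ∈ E' := by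
    intro z hz μ hμ1 hμ2 x hx hSx hTx hCx
    have hxE : x ∈ E := by
      rw [hEdef]
      refine ⟨hx.1, fun j hj => ?_, fun j hj => ?_⟩
      · by_contra hne
        exact hj (hSx ▸ hne)
      · by_contra hne
        exact hj (hTx ▸ hne)
    rw [hE'def]
    refine ⟨hxE, fun y hy => ?_⟩
    rw [hDdef] at hy
    have hyE := hy.1
    rw [hEdef] at hyE
    have hyOm : y ∈ Om l u := hyE.1
    have hobj := hx.2 y hyOm
    -- zeroNorm facts for x
    have hzx : zeroNorm x = S.ncard := by
      show (Function.support x).ncard = S.ncard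
      rw [hSx]
    have hzBx : zeroNorm (B.mulVec x) = T.ncard := by
      show (Function.support (B.mulVec x)).ncard = T.ncard
      rw [hTx]
    -- support facts for y
    have hys : Function.support y ⊆ S := Function.support_subset_iff'.mpr hyE.2.1
    have hyt : Function.support (B.mulVec y) ⊆ T := Function.support_subset_iff'.mpr hyE.2.2
    have hsy : (zeroNorm y : ℝ) ≤ (S.ncard : ℝ) :=
      Nat.cast_le.mpr (Set.ncard_le_ncard hys S.toFinite)
    have hty : (zeroNorm (B.mulVec y) : ℝ) ≤ (T.ncard : ℝ) :=
      Nat.cast_le.mpr (Set.ncard_le_ncard hyt T.toFinite)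
    -- counting estimate
    have hcount : lam1 * (zeroNorm (B.mulVec y) : ℝ) + lam2 * (zeroNorm y : ℝ) ≤
        lam1 * (zeroNorm (B.mulVec x) : ℝ) + lam2 * (zeroNorm x : ℝ) - δ := by
      rw [hzx, hzBx]
      cases i with
      | inl j =>
        have hBxj : B.mulVec x j ≠ 0 := by
          rw [aux_fromRows_inl] at hCx; exact hCx
        have hjT : j ∈ T := hTx ▸ hBxj
        have hByj : B.mulVec y j = 0 := by
          have h2 := hy.2
          rw [aux_fromRows_inl] at h2; exact h2
        have hsub : Function.support (B.mulVec y) ⊆ T \ {j} := by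
          intro k hk
          exact ⟨hyt hk, fun hkj => hk
            (by rw [Set.mem_singleton_iff] at hkj; rw [hkj]; exact hByj)⟩
        have h1T : 1 ≤ T.ncard := (Set.ncard_pos T.toFinite).mpr ⟨j, hjT⟩
        have hle : zeroNorm (B.mulVec y) ≤ T.ncard - 1 := by
          have h3 := Set.ncard_le_ncard hsub (T \ {j}).toFinite
          rwa [Set.ncard_diff_singleton_of_mem hjT] at h3
        have hle' : (zeroNorm (B.mulVec y) : ℝ) ≤ (T.ncard : ℝ) - 1 := by
          have h4 : zeroNorm (B.mulVec y) + 1 ≤ T.ncard := by omega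
          have h5 : ((zeroNorm (B.mulVec y) : ℝ) + 1) ≤ (T.ncard : ℝ) := by exact_mod_cast h4
          linarith
        nlinarith [mul_le_mul_of_nonneg_left hle' hlam1.le,
          mul_le_mul_of_nonneg_left hsy hlam2.le]
      | inr j =>
        have hxj : x j ≠ 0 := by
          rw [aux_fromRows_inr] at hCx; exact hCx
        have hjS : j ∈ S := hSx ▸ hxj
        have hyj : y j = 0 := by
          have h2 := hy.2
          rw [aux_fromRows_inr] at h2; exact h2
        have hsub : Function.support y ⊆ S \ {j} := by
          intro k hk
          exact ⟨hys hk, fun hkj => hk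
            (by rw [Set.mem_singleton_iff] at hkj; rw [hkj]; exact hyj)⟩
        have h1S : 1 ≤ S.ncard := (Set.ncard_pos S.toFinite).mpr ⟨j, hjS⟩
        have hle : zeroNorm y ≤ S.ncard - 1 := by
          have h3 := Set.ncard_le_ncard hsub (S \ {j}).toFinite
          rwa [Set.ncard_diff_singleton_of_mem hjS] at h3
        have hle' : (zeroNorm y : ℝ) ≤ (S.ncard : ℝ) - 1 := by
          have h4 : zeroNorm y + 1 ≤ S.ncard := by omega
          have h5 : ((zeroNorm y : ℝ) + 1) ≤ (S.ncard : ℝ) := by exact_mod_cast h4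
          linarith
        nlinarith [mul_le_mul_of_nonneg_left hle' hlam2.le,
          mul_le_mul_of_nonneg_left hty hlam1.le]
    -- quadratic estimate
    have hquad : δ ≤ μ / 2 * ‖y - z‖ ^ 2 - μ / 2 * ‖x - z‖ ^ 2 := by linarith
    have hba : ‖y - z‖ - ‖x - z‖ ≤ ‖y - x‖ := by
      have h6 := norm_sub_norm_le (y - z) (x - z)
      rwa [sub_sub_sub_cancel_right] at h6
    have hxa : ‖x - z‖ ≤ RΩ + RΞ := by
      calc ‖x - z‖ ≤ ‖x‖ + ‖z‖ := norm_sub_le _ _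
        _ ≤ RΩ + RΞ := add_le_add (hRΩ x hx.1) (hRΞ z hz)
    have hya : ‖y - z‖ ≤ RΩ + RΞ := by
      calc ‖y - z‖ ≤ ‖y‖ + ‖z‖ := norm_sub_le _ _
        _ ≤ RΩ + RΞ := add_le_add (hRΩ y hyOm) (hRΞ z hz)
    have hsumM : ‖y - z‖ + ‖x - z‖ ≤ M := by linarith
    rw [hδ'def, div_le_iff₀ (mul_pos hμhigh0 hM0)]
    exact aux_real μ μlow μhigh δ M ‖x - z‖ ‖y - z‖ ‖y - x‖ hμ1 hμlow hμ2 hM0 hδ0 hquad hba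
      hsumM (norm_nonneg _) (norm_nonneg _) (norm_nonneg _)
  -- choose ν via compact minimization
  by_cases hne : E'.Nonempty
  · obtain ⟨x₀, hx₀, hminx₀⟩ := hE'cpt.exists_isMinOn hne
      (((aux_mulVec_continuous (Matrix.fromRows B (1 : Matrix (Fin n) (Fin n) ℝ)) i).abs).continuousOn)
    refine ⟨|(Matrix.fromRows B (1 : Matrix (Fin n) (Fin n) ℝ)).mulVec x₀ i|, ?_, ?_⟩
    · rcases (abs_nonneg ((Matrix.fromRows B (1 : Matrix (Fin n) (Fin n) ℝ)).mulVec x₀ i)).lt_or_eq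
        with h | h
      · exact h
      · exfalso
        have h0 : (Matrix.fromRows B (1 : Matrix (Fin n) (Fin n) ℝ)).mulVec x₀ i = 0 :=
          abs_eq_zero.mp h.symm
        have hx₀E : x₀ ∈ E := by rw [hE'def] at hx₀; exact hx₀.1
        have hx₀D : x₀ ∈ D := by rw [hDdef]; exact ⟨hx₀E, h0⟩
        have h7 : δ' ≤ ‖x₀ - x₀‖ := by
          rw [hE'def] at hx₀; exact hx₀.2 x₀ hx₀D
        simp only [sub_self, norm_zero] at h7
        linarith
    · intro z hz μ hμ1 hμ2 x hx hSx hTx hCx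
      exact hminx₀ (hmem z hz μ hμ1 hμ2 x hx hSx hTx hCx)
  · refine ⟨1, one_pos, ?_⟩
    intro z hz μ hμ1 hμ2 x hx hSx hTx hCx
    exact absurd (hmem z hz μ hμ1 hμ2 x hx hSx hTx hCx) (fun h => hne ⟨x, h⟩)

/-- uniform lower bound on the nonzero entries of `C u = [B; I] u` for points
`u` of `⋃_{z∈Ξ, μ∈[μ_low,μ_high]} prox_{μ⁻¹ g}(z)`. -/
theorem stmt2 {n p : ℕ} (B : Matrix (Fin p) (Fin n) ℝ) (lam1 lam2 : ℝ)
    (hlam1 : 0 < lam1) (hlam2 : 0 < lam2)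
    (l u : Fin n → ℝ) (hl : ∀ i, l i ≤ 0) (hu : ∀ i, 0 ≤ u i)
    (Ξ : Set (EuclideanSpace ℝ (Fin n))) (hΞne : Ξ.Nonempty) (hΞcomp : IsCompact Ξ)
    (μlow μhigh : ℝ) (hμlow : 0 < μlow) (hμ : μlow < μhigh) :
    ∃ ν > (0 : ℝ), ∀ z ∈ Ξ, ∀ μ : ℝ, μlow ≤ μ → μ ≤ μhigh →
      ∀ x ∈ proxSet B lam1 lam2 l u μ z, x ≠ 0 →
      ∀ i : Fin p ⊕ Fin n,
        (Matrix.fromRows B (1 : Matrix (Fin n) (Fin n) ℝ)).mulVec x i ≠ 0 →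
        ν ≤ |(Matrix.fromRows B (1 : Matrix (Fin n) (Fin n) ℝ)).mulVec x i| := by
  classical
  rcases isEmpty_or_nonempty (Fin p ⊕ Fin n) with hempty | hnonempty
  · exact ⟨1, one_pos, fun z _ μ _ _ x _ _ i => (hempty.false i).elim⟩
  · have hkey := fun (t : (Fin p ⊕ Fin n) × Set (Fin n) × Set (Fin p)) =>
      aux_key B lam1 lam2 hlam1 hlam2 l u Ξ hΞcomp μlow μhigh hμlow hμ t.1 t.2.1 t.2.2
    choose f hf0 hf using hkey
    letI : Fintype ((Fin p ⊕ Fin n) × Set (Fin n) × Set (Fin p)) := Fintype.ofFinite _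
    haveI : Nonempty ((Fin p ⊕ Fin n) × Set (Fin n) × Set (Fin p)) :=
      ⟨(Classical.arbitrary _, ∅, ∅)⟩
    have hne : (Finset.univ : Finset ((Fin p ⊕ Fin n) × Set (Fin n) × Set (Fin p))).Nonempty :=
      Finset.univ_nonempty
    refine ⟨Finset.univ.inf' hne f, ?_, ?_⟩
    · exact (Finset.lt_inf'_iff hne).mpr fun t _ => hf0 t
    · intro z hz μ h1 h2 x hx hx0 i hCi
      exact le_trans (Finset.inf'_le f (Finset.mem_univ (i, Function.support x,
        Function.support (B.mulVec x))))
        (hf (i, Function.support x, Function.support (B.mulVec x)) z hz μ h1 h2 x hx rfl rfl hCi)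

end
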